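/- If two plane real polynomials f and g (viewed in (ℝ[x])[y], with g of positive degree in y) have nonzero resultant r(x) = res_y(f,g), and S ⊆ ℝ is a connected set on which r has no zeros, and β : S → ℝ is a continuous function with f(x, β(x)) = 0 for all x ∈ S (a section of f), then g is sign-invariant on the section: the sign of g(x, β(x)) is constant on S (in fact g(x, β(x)) ≠ 0 for all x ∈ S, and by continuity and connectedness its sign is constant). -/

import Mathlib

open Polynomial

/-- The Sylvester matrix of two univariate polynomials over a commutative ring. -/
noncomputable def sylvesterMatrix {R : Type*} [CommRing R] (f g : Polynomial R) :
    Matrix (Fin (g.natDegree + f.natDegree)) (Fin (g.natDegree + f.natDegree)) R :=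
  Matrix.of fun i j =>
    if (i : ℕ) < g.natDegree then
      if (i : ℕ) ≤ (j : ℕ) ∧ (j : ℕ) ≤ (i : ℕ) + f.natDegree then
        f.coeff (f.natDegree + (i : ℕ) - (j : ℕ))
      else 0
    else
      if (i : ℕ) - g.natDegree ≤ (j : ℕ) ∧ (j : ℕ) ≤ ((i : ℕ) - g.natDegree) + g.natDegree then
        g.coeff (g.natDegree + ((i : ℕ) - g.natDegree) - (j : ℕ))
      else 0

/-- The resultant of two univariate polynomials, as the determinant of their Sylvester matrix. -/
noncomputable def resultant {R : Type*} [CommRing R] (f g : Polynomial R) : R :=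
  (sylvesterMatrix f g).det

/-- Generic row computation: a "shifted coefficient row" of a polynomial `p` dotted with the
vector of decreasing powers of a root `α` of (the evaluation at `x` of) `p` vanishes. -/
lemma row_dot_pow_eq_zero (p : Polynomial (Polynomial ℝ)) (hp : p.Monic) (x α : ℝ)
    (hroot : (p.map (Polynomial.evalRingHom x)).eval α = 0)
    (N i₀ : ℕ) (hiN : i₀ + p.natDegree < N) :
    ∑ j ∈ Finset.range N,
      (if i₀ ≤ j ∧ j ≤ i₀ + p.natDegree then
        (p.coeff (p.natDegree + i₀ - j)).eval x else 0) * α ^ (N - 1 - j) = 0 := by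
  set d := p.natDegree with hd
  set P : Polynomial ℝ := p.map (Polynomial.evalRingHom x) with hP
  have hPdeg : P.natDegree = d := hp.natDegree_map _
  have hcoeff : ∀ k, P.coeff k = (p.coeff k).eval x := fun k => Polynomial.coeff_map _ _
  calc
    ∑ j ∈ Finset.range N,
        (if i₀ ≤ j ∧ j ≤ i₀ + d then (p.coeff (d + i₀ - j)).eval x else 0) * α ^ (N - 1 - j)
      = ∑ j ∈ Finset.range N,
        (if j ∈ Finset.Icc i₀ (i₀ + d) then
          (p.coeff (d + i₀ - j)).eval x * α ^ (N - 1 - j) else 0) := by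
        refine Finset.sum_congr rfl fun j _ => ?_
        simp [Finset.mem_Icc, ite_mul]
    _ = ∑ j ∈ Finset.range N ∩ Finset.Icc i₀ (i₀ + d),
          (p.coeff (d + i₀ - j)).eval x * α ^ (N - 1 - j) := Finset.sum_ite_mem _ _ _
    _ = ∑ j ∈ Finset.Icc i₀ (i₀ + d),
          (p.coeff (d + i₀ - j)).eval x * α ^ (N - 1 - j) := by
        rw [Finset.inter_eq_right.mpr]
        intro j hj
        rw [Finset.mem_Icc] at hj
        rw [Finset.mem_range]
        omega
    _ = ∑ j ∈ Finset.Ico i₀ (i₀ + d + 1),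
          (p.coeff (d + i₀ - j)).eval x * α ^ (N - 1 - j) := by
        rw [Finset.Ico_add_one_right_eq_Icc]
    _ = ∑ t ∈ Finset.range (i₀ + d + 1 - i₀),
          (p.coeff (d + i₀ - (i₀ + t))).eval x * α ^ (N - 1 - (i₀ + t)) :=
        Finset.sum_Ico_eq_sum_range _ _ _
    _ = ∑ t ∈ Finset.range (d + 1),
          ((p.coeff (d - t)).eval x * α ^ (d - t)) * α ^ (N - 1 - i₀ - d) := by
        have : i₀ + d + 1 - i₀ = d + 1 := by omega
        rw [this]
        refine Finset.sum_congr rfl fun t ht => ?_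
        rw [Finset.mem_range] at ht
        have h1 : d + i₀ - (i₀ + t) = d - t := by omega
        have h2 : N - 1 - (i₀ + t) = (d - t) + (N - 1 - i₀ - d) := by omega
        rw [h1, h2, pow_add, mul_assoc]
    _ = (∑ t ∈ Finset.range (d + 1), (p.coeff (d - t)).eval x * α ^ (d - t))
          * α ^ (N - 1 - i₀ - d) := by rw [Finset.sum_mul]
    _ = 0 := by
        have : (∑ t ∈ Finset.range (d + 1), (p.coeff (d - t)).eval x * α ^ (d - t)) = P.eval α := by
          have := Finset.sum_range_reflect (fun k => P.coeff k * α ^ k) (d + 1)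
          simp only [Nat.add_sub_cancel] at this
          rw [Polynomial.eval_eq_sum_range, hPdeg, ← this]
          refine Finset.sum_congr rfl fun t ht => ?_
          rw [Finset.mem_range] at ht
          rw [hcoeff]
        rw [this, hroot, zero_mul]

/-- If `f` and `g` (monic in `y`, `g` of positive `y`-degree) have a common root `α` after
evaluating the coefficients at `x`, then the resultant evaluated at `x` vanishes. -/
lemma resultant_eval_eq_zero (f g : Polynomial (Polynomial ℝ))
    (hf : f.Monic) (hg : g.Monic) (hdeg : 0 < g.natDegree) (x α : ℝ)
    (hfα : (f.map (Polynomial.evalRingHom x)).eval α = 0)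
    (hgα : (g.map (Polynomial.evalRingHom x)).eval α = 0) :
    (_root_.resultant f g).eval x = 0 := by
  set n := g.natDegree with hn
  set m := f.natDegree with hm
  set N := n + m with hN
  have hN0 : 0 < N := by omega
  set M : Matrix (Fin N) (Fin N) ℝ :=
    (sylvesterMatrix f g).map (fun q => q.eval x) with hM
  have hdet : (_root_.resultant f g).eval x = M.det := by
    have := RingHom.map_det (Polynomial.evalRingHom x) (sylvesterMatrix f g)
    simpa [_root_.resultant, hM] using this
  rw [hdet]
  rw [← Matrix.exists_mulVec_eq_zero_iff]
  refine ⟨fun j => α ^ (N - 1 - (j : ℕ)), ?_, ?_⟩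
  · intro h
    have := congr_fun h ⟨N - 1, by omega⟩
    simp only [Pi.zero_apply] at this
    rw [Nat.sub_self] at this
    simp at this
  · funext i
    simp only [Matrix.mulVec, dotProduct, Pi.zero_apply]
    by_cases hi : (i : ℕ) < n
    · have heq : ∑ j : Fin N, M i j * α ^ (N - 1 - (j : ℕ)) =
          ∑ j : Fin N, (if (i : ℕ) ≤ (j : ℕ) ∧ (j : ℕ) ≤ (i : ℕ) + f.natDegree then
            (f.coeff (f.natDegree + (i : ℕ) - (j : ℕ))).eval x else 0) * α ^ (N - 1 - (j : ℕ)) := by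
        refine Finset.sum_congr rfl fun j _ => ?_
        simp [hM, sylvesterMatrix, Matrix.map_apply, hi, apply_ite (Polynomial.eval x), ← hn]
      rw [heq]
      exact (Fin.sum_univ_eq_sum_range (fun j =>
        (if (i : ℕ) ≤ j ∧ j ≤ (i : ℕ) + f.natDegree then
          (f.coeff (f.natDegree + (i : ℕ) - j)).eval x else 0) * α ^ (N - 1 - j)) N).trans
        (row_dot_pow_eq_zero f hf x α hfα N i (by omega))
    · have heq : ∑ j : Fin N, M i j * α ^ (N - 1 - (j : ℕ)) =
          ∑ j : Fin N, (if (i : ℕ) - n ≤ (j : ℕ) ∧ (j : ℕ) ≤ ((i : ℕ) - n) + g.natDegree then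
            (g.coeff (g.natDegree + ((i : ℕ) - n) - (j : ℕ))).eval x else 0)
            * α ^ (N - 1 - (j : ℕ)) := by
        refine Finset.sum_congr rfl fun j _ => ?_
        simp [hM, sylvesterMatrix, Matrix.map_apply, hi, apply_ite (Polynomial.eval x), ← hn]
      rw [heq]
      have hiN : ((i : ℕ) - n) + g.natDegree < N := by
        have := i.2
        omega
      exact (Fin.sum_univ_eq_sum_range (fun j =>
        (if (i : ℕ) - n ≤ j ∧ j ≤ ((i : ℕ) - n) + g.natDegree then
          (g.coeff (g.natDegree + ((i : ℕ) - n) - j)).eval x else 0) * α ^ (N - 1 - j)) N).trans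
        (row_dot_pow_eq_zero g hg x α hgα N ((i : ℕ) - n) hiN)

/-- if f, g ∈ (ℝ[x])[y] are monic in y with g of positive degree in y,
r = res_y(f,g) has no zeros on a connected set S ⊆ ℝ, and β is a continuous section of
f over S (f(x, β(x)) = 0 on S), then g is sign-invariant on the section: the sign of
g(x, β(x)) is constant (and nonzero) on S. -/
theorem sign_invariant_on_section (f g : Polynomial (Polynomial ℝ))
    (hf : f.Monic) (hg : g.Monic) (hdeg : 0 < g.natDegree)
    (S : Set ℝ) (hS : IsConnected S)
    (hr : ∀ x ∈ S, (_root_.resultant f g).eval x ≠ 0)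
    (β : ℝ → ℝ) (hβ : ContinuousOn β S)
    (hsec : ∀ x ∈ S, (f.map (Polynomial.evalRingHom x)).eval (β x) = 0) :
    (∀ x ∈ S, (g.map (Polynomial.evalRingHom x)).eval (β x) ≠ 0) ∧
    ((∀ x ∈ S, (g.map (Polynomial.evalRingHom x)).eval (β x) > 0) ∨
      (∀ x ∈ S, (g.map (Polynomial.evalRingHom x)).eval (β x) < 0)) := by
  set h : ℝ → ℝ := fun x => (g.map (Polynomial.evalRingHom x)).eval (β x) with hh
  have key : ∀ x ∈ S, h x ≠ 0 := by
    intro x hx h0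
    exact hr x hx (resultant_eval_eq_zero f g hf hg hdeg x (β x) (hsec x hx) h0)
  have hcont : ContinuousOn h S := by
    have c1 : ContinuousOn
        (fun x => ∑ k ∈ Finset.range (g.natDegree + 1), (g.coeff k).eval x * (β x) ^ k) S := by
      refine continuousOn_finset_sum _ fun k _ => ?_
      exact ((g.coeff k).continuous).continuousOn.mul (hβ.pow k)
    refine c1.congr fun x hx => ?_
    have hGdeg : (g.map (Polynomial.evalRingHom x)).natDegree < g.natDegree + 1 := by
      have := hg.natDegree_map (Polynomial.evalRingHom x)
      omega
    rw [hh]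
    simp only
    rw [Polynomial.eval_eq_sum_range' hGdeg]
    exact Finset.sum_congr rfl fun k _ => by rw [Polynomial.coeff_map]; rfl
  refine ⟨key, ?_⟩
  obtain ⟨x₀, hx₀⟩ := hS.nonempty
  rcases lt_or_gt_of_ne (key x₀ hx₀) with hneg | hpos
  · right
    intro x hx
    by_contra hle
    push_neg at hle
    have hxpos : h x > 0 := lt_of_le_of_ne hle (Ne.symm (key x hx))
    have := hS.isPreconnected.intermediate_value hx₀ hx hcont
    have h0 : (0 : ℝ) ∈ Set.Icc (h x₀) (h x) := ⟨le_of_lt hneg, le_of_lt hxpos⟩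
    obtain ⟨z, hz, hz0⟩ := this h0
    exact key z hz hz0
  · left
    intro x hx
    by_contra hle
    push_neg at hle
    have hxneg : h x < 0 := lt_of_le_of_ne hle (key x hx)
    have := hS.isPreconnected.intermediate_value hx hx₀ hcont
    have h0 : (0 : ℝ) ∈ Set.Icc (h x) (h x₀) := ⟨le_of_lt hxneg, le_of_lt hpos⟩
    obtain ⟨z, hz, hz0⟩ := this h0
    exact key z hz hz0
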